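/- Let p be a prime, G a finite group, and N a normal subgroup of G such that the center Z(N) is a p-group. If Aut(G/N) and Aut(N) are both p-groups, then Aut_N(G), the group of automorphisms of G mapping N to itself, is a p-group. (Corollary 2.3.) -/

import Mathlib

open Pointwise

section aux
variable {p : ℕ} [Fact p.Prime]

omit [Fact p.Prime] in
lemma prod_pGroup {A B : Type*} [Group A] [Group B] (hA : IsPGroup p A) (hB : IsPGroup p B) :
    IsPGroup p (A × B) := by
  rintro ⟨a, b⟩
  obtain ⟨k, hk⟩ := hA a
  obtain ⟨l, hl⟩ := hB b
  refine ⟨k + l, ?_⟩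
  rw [Prod.pow_mk, Prod.mk_eq_one, pow_add, pow_mul, hk, one_pow, pow_mul', hl, one_pow]
  exact ⟨rfl, rfl⟩

lemma fun_pGroup {ι H : Type*} [Finite ι] [Group H] [Finite H] (h : IsPGroup p H) :
    IsPGroup p (ι → H) := by
  obtain ⟨n, hn⟩ := (IsPGroup.iff_card).mp h
  exact IsPGroup.of_card (by rw [Nat.card_fun, hn, ← pow_mul])

end aux

theorem autN_is_pGroup (p : ℕ) [Fact p.Prime]
    {G : Type*} [Group G] [Finite G] (N : Subgroup G) [N.Normal]
    (hZ : IsPGroup p (Subgroup.center ↥N))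
    (hQ : IsPGroup p (MulAut (G ⧸ N)))
    (hN : IsPGroup p (MulAut ↥N)) :
    IsPGroup p ↥(MulAction.stabilizer (MulAut G) N) := by
  set S := MulAction.stabilizer (MulAut G) N with hS
  have hmap : ∀ σ : S, N.map ((σ : MulAut G) : G →* G) = N := by
    intro σ
    have h := σ.2
    rw [MulAction.mem_stabilizer_iff, Subgroup.pointwise_smul_def] at h
    have h' : N.map ((σ : MulAut G) : G →* G)
        = N.map (MulDistribMulAction.toMonoidEnd (MulAut G) G (σ : MulAut G)) := by
      congr 1
    rw [h', h]
  let Φ : S →* MulAut ↥N × MulAut (G ⧸ N) :=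
    { toFun := fun σ =>
        (((σ : MulAut G).subgroupMap N).trans (MulEquiv.subgroupCongr (hmap σ)),
          QuotientGroup.congr N N (σ : MulAut G) (hmap σ))
      map_one' := by
        refine Prod.ext ?_ ?_
        · ext x; rfl
        · ext x
          refine QuotientGroup.induction_on x fun g => ?_
          simp [QuotientGroup.congr_mk']
      map_mul' := by
        intro σ τ
        refine Prod.ext ?_ ?_
        · ext x; rfl
        · ext x
          refine QuotientGroup.induction_on x fun g => ?_
          simp [QuotientGroup.congr_mk'] }
  -- properties of kernel elements
  have kfix : ∀ σ ∈ Φ.ker, ∀ n ∈ N, (σ : MulAut G) n = n := by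
    intro σ hσ n hn
    have h1 := congrArg Prod.fst (MonoidHom.mem_ker.mp hσ)
    have := congrArg (fun e : MulAut ↥N => ((e ⟨n, hn⟩ : ↥N) : G)) h1
    exact this
  have kmem : ∀ σ ∈ Φ.ker, ∀ g : G, g⁻¹ * (σ : MulAut G) g ∈ N := by
    intro σ hσ g
    have h2 := congrArg Prod.snd (MonoidHom.mem_ker.mp hσ)
    have := congrArg (fun e : MulAut (G ⧸ N) => e ((g : G) : G ⧸ N)) h2
    simp only [Φ, MonoidHom.coe_mk, OneHom.coe_mk, QuotientGroup.congr_mk', MulAut.one_apply] at this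
    exact (QuotientGroup.eq).mp this.symm
  have kcen : ∀ σ ∈ Φ.ker, ∀ g : G, ∀ n ∈ N,
      n * (g⁻¹ * (σ : MulAut G) g) = (g⁻¹ * (σ : MulAut G) g) * n := by
    intro σ hσ g n hn
    have hm : g * n * g⁻¹ ∈ N := Subgroup.Normal.conj_mem ‹N.Normal› n hn g
    have key : (σ : MulAut G) g * n = g * n * g⁻¹ * (σ : MulAut G) g := by
      have e1 : (σ : MulAut G) (g * n) = (σ : MulAut G) g * n := by
        rw [map_mul, kfix σ hσ n hn]
      have e2 : (σ : MulAut G) ((g * n * g⁻¹) * g) = g * n * g⁻¹ * (σ : MulAut G) g := by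
        rw [map_mul, kfix σ hσ _ hm]
      rw [← e1, ← e2]
      congr 1
      group
    calc n * (g⁻¹ * (σ : MulAut G) g) = g⁻¹ * (g * n * g⁻¹ * (σ : MulAut G) g) := by group
      _ = g⁻¹ * ((σ : MulAut G) g * n) := by rw [← key]
      _ = (g⁻¹ * (σ : MulAut G) g) * n := by group
  -- embed kernel into functions G → center N
  let F : Φ.ker →* (G → Subgroup.center ↥N) :=
    { toFun := fun σ g =>
        ⟨⟨g⁻¹ * (σ : MulAut G) g, kmem σ σ.2 g⟩, by
          rw [Subgroup.mem_center_iff]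
          intro m
          exact Subtype.ext (kcen σ σ.2 g m m.2)⟩
      map_one' := by
        funext g
        exact Subtype.ext (Subtype.ext (by simp))
      map_mul' := by
        intro σ τ
        funext g
        refine Subtype.ext (Subtype.ext ?_)
        show g⁻¹ * (σ : MulAut G) ((τ : MulAut G) g)
            = (g⁻¹ * (σ : MulAut G) g) * (g⁻¹ * (τ : MulAut G) g)
        have : (τ : MulAut G) g = g * (g⁻¹ * (τ : MulAut G) g) := by group
        rw [this, map_mul, kfix σ σ.2 _ (kmem τ τ.2 g)]
        group }
  have Finj : Function.Injective F := by
    rw [← F.ker_eq_bot_iff, eq_bot_iff]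
    intro σ hσ
    have h : ∀ g : G, (σ : MulAut G) g = g := by
      intro g
      have := congrFun (MonoidHom.mem_ker.mp hσ) g
      have h2 : g⁻¹ * (σ : MulAut G) g = 1 := by
        exact congrArg (fun x : ↥(Subgroup.center ↥N) => ((x : ↥N) : G)) this
      calc (σ : MulAut G) g = g * (g⁻¹ * (σ : MulAut G) g) := by group
        _ = g := by rw [h2, mul_one]
    have : σ = 1 := by
      ext1
      ext1
      ext g
      exact h g
    simp [this]
  have hker : IsPGroup p Φ.ker := (fun_pGroup hZ).of_injective F Finj
  have hprod : IsPGroup p (MulAut ↥N × MulAut (G ⧸ N)) := prod_pGroup hN hQ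
  have htop : IsPGroup p ((⊤ : Subgroup (MulAut ↥N × MulAut (G ⧸ N))).comap Φ) :=
    IsPGroup.comap_of_ker_isPGroup (hprod.to_subgroup ⊤) Φ hker
  rw [Subgroup.comap_top] at htop
  exact htop.of_equiv Subgroup.topEquiv
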